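/- Let V = {1,2}, J ≥ 0, h = 0, so H(σ) = -J σ_1 σ_2 on Ω = {-1,+1}^2, and let β > 0. Define the probability distribution π on Ω by π(++) = π(--) = e^{βJ} / (Z_β + 2 e^{-βJ}(1 - e^{-2βJ})) and π(+-) = π(-+) = (e^{-βJ} + e^{-βJ}(1 - e^{-2βJ})) / (Z_β + 2 e^{-βJ}(1 - e^{-2βJ})), where Z_β = 2e^{βJ} + 2e^{-βJ}. Then π is a stationary distribution of P_β^{DA}: ∑_{τ∈Ω} π(τ) P_β^{DA}(τ, σ) = π(σ) for all σ ∈ Ω. -/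

import Mathlib

open Finset Filter
open scoped Classical

noncomputable section

/-- The real spin value of a Boolean spin: `true ↦ +1`, `false ↦ -1`. -/
def spin (b : Bool) : ℝ := if b then 1 else -1

variable {V : Type*} [Fintype V] [DecidableEq V]

/-- The configuration obtained from `σ` by flipping the spin at `x`. -/
def flipConf (σ : V → Bool) (x : V) : V → Bool := Function.update σ x (!(σ x))

/-- The Ising Hamiltonian with couplings `J` and external fields `h`. -/
def Ham (J : V → V → ℝ) (h : V → ℝ) (σ : V → Bool) : ℝ :=
  -(1 / 2) * ∑ x : V, ∑ y : V, J x y * spin (σ x) * spin (σ y)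
    - ∑ x : V, h x * spin (σ x)

/-- `Ecost J h x σ = H(σ^x) - H(σ)`, the energetic cost of flipping the spin at `x`. -/
def Ecost (J : V → V → ℝ) (h : V → ℝ) (x : V) (σ : V → Bool) : ℝ :=
  Ham J h (flipConf σ x) - Ham J h σ

/-- Metropolis acceptance probability `exp(-β E_y(σ)^+)`. -/
def acc (J : V → V → ℝ) (h : V → ℝ) (β : ℝ) (σ : V → Bool) (y : V) : ℝ :=
  Real.exp (-β * max (Ecost J h y σ) 0)

/-- The Digital Annealer transition matrix. -/
def Pda (J : V → V → ℝ) (h : V → ℝ) (β : ℝ) (σ τ : V → Bool) : ℝ :=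
  if τ = σ then ∏ y : V, (1 - acc J h β σ y)
  else ∑ x ∈ Finset.univ.filter (fun x => τ = flipConf σ x),
        ∑ S ∈ Finset.univ.powerset.filter (fun S : Finset V => x ∈ S),
          ((S.card : ℝ))⁻¹ * (∏ y ∈ S, acc J h β σ y) * ∏ y ∈ Sᶜ, (1 - acc J h β σ y)

/-- The Gibbs distribution at inverse temperature `β`. -/
def gibbs (J : V → V → ℝ) (h : V → ℝ) (β : ℝ) (σ : V → Bool) : ℝ :=
  Real.exp (-β * Ham J h σ) / ∑ τ : V → Bool, Real.exp (-β * Ham J h τ)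

/-- The quantity `R(σ, σ^x)` from the paper. -/
def Rw (J : V → V → ℝ) (h : V → ℝ) (β : ℝ) (σ : V → Bool) (x : V) : ℝ :=
  ∑ S ∈ (Finset.univ.erase x).powerset,
    ((S.card : ℝ) + 1)⁻¹ * (∏ y ∈ S, acc J h β σ y) *
      ∏ y ∈ (Finset.univ.erase x) \ S, (1 - acc J h β σ y)

/-- `τ` is reachable from `σ` at height `E`. -/
def Reachable (H : (V → Bool) → ℝ) (E : ℝ) (σ τ : V → Bool) : Prop :=
  (σ = τ ∧ H σ ≤ E) ∨
    ∃ n : ℕ, 1 ≤ n ∧ ∃ p : ℕ → (V → Bool), p 0 = σ ∧ p n = τ ∧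
      (∀ k, 1 ≤ k → k ≤ n → ∃ x, p k = flipConf (p (k - 1)) x) ∧
      (∀ i ≤ n, H (p i) ≤ E)

/-- `σ` is a local minimum of `H`. -/
def IsLocMin (H : (V → Bool) → ℝ) (σ : V → Bool) : Prop :=
  ¬ ∃ τ, H τ < H σ ∧ Reachable H (H σ) σ τ

/-- `σ` is a ground state (global minimum) of `H`. -/
def IsGround (H : (V → Bool) → ℝ) (σ : V → Bool) : Prop := ∀ τ, H σ ≤ H τ

/-- The depth of a local minimum which is not a ground state: the smallest `E > 0` such
that some strictly lower state is reachable from `σ` at height `H(σ) + E`. -/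
def depth (H : (V → Bool) → ℝ) (σ : V → Bool) : ℝ :=
  sInf {E : ℝ | 0 < E ∧ ∃ τ, H τ < H σ ∧ Reachable H (H σ + E) σ τ}

/-- `γ*`: the maximum of the depths of the local minima of `H` that are not ground
states (`0` if every local minimum is a ground state). -/
def gammaStar (H : (V → Bool) → ℝ) : ℝ :=
  sSup ({0} ∪ {d : ℝ | ∃ σ, IsLocMin H σ ∧ ¬ IsGround H σ ∧ d = depth H σ})

end

/-- The candidate stationary distribution for the two-spin ferromagnet. -/
noncomputable def piDA2 (J β : ℝ) (σ : Fin 2 → Bool) : ℝ :=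
  if σ 0 = σ 1 then
    Real.exp (β * J) /
      ((2 * Real.exp (β * J) + 2 * Real.exp (-β * J))
        + 2 * Real.exp (-β * J) * (1 - Real.exp (-2 * β * J)))
  else
    (Real.exp (-β * J) + Real.exp (-β * J) * (1 - Real.exp (-2 * β * J))) /
      ((2 * Real.exp (β * J) + 2 * Real.exp (-β * J))
        + 2 * Real.exp (-β * J) * (1 - Real.exp (-2 * β * J)))

section Aux

@[simp] lemma spin_not (b : Bool) : spin (!b) = -spin b := by cases b <;> simp [spin]

@[simp] lemma flip_same (σ : Fin 2 → Bool) (x : Fin 2) : flipConf σ x x = !σ x := by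
  simp [flipConf]

@[simp] lemma flip01 (σ : Fin 2 → Bool) : flipConf σ 0 1 = σ 1 := by
  simp [flipConf, Function.update_of_ne]

@[simp] lemma flip10 (σ : Fin 2 → Bool) : flipConf σ 1 0 = σ 0 := by
  simp [flipConf, Function.update_of_ne]

lemma ham2 (J : ℝ) (σ : Fin 2 → Bool) :
    Ham (fun i j : Fin 2 => if i = j then 0 else J) (fun _ => 0) σ
      = -J * (spin (σ 0) * spin (σ 1)) := by
  simp [Ham, Fin.sum_univ_two]
  ring

lemma ecost2 (J : ℝ) (x : Fin 2) (σ : Fin 2 → Bool) :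
    Ecost (fun i j : Fin 2 => if i = j then 0 else J) (fun _ => 0) x σ
      = 2 * J * (spin (σ 0) * spin (σ 1)) := by
  unfold Ecost
  rw [ham2, ham2]
  fin_cases x <;> simp <;> ring


lemma acc2 (J : ℝ) (hJ : 0 ≤ J) (β : ℝ) (σ : Fin 2 → Bool) (y : Fin 2) :
    acc (fun i j : Fin 2 => if i = j then 0 else J) (fun _ => 0) β σ y
      = if σ 0 = σ 1 then Real.exp (-(2 * β * J)) else 1 := by
  unfold acc
  rw [ecost2]
  cases h0 : σ 0 <;> cases h1 : σ 1 <;> simp [spin, h0, h1] <;>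
    first
      | exact Or.inr hJ
      | (rw [max_eq_left (by linarith : (0:ℝ) ≤ 2 * J)]; ring)

lemma Pda_self {Jm : Fin 2 → Fin 2 → ℝ} {h : Fin 2 → ℝ} {β : ℝ} (σ : Fin 2 → Bool) :
    Pda Jm h β σ σ = (1 - acc Jm h β σ 0) * (1 - acc Jm h β σ 1) := by
  simp [Pda, Fin.prod_univ_two]

lemma flip_eq_of (σ τ : Fin 2 → Bool) (x : Fin 2) (h0 : τ x = !σ x)
    (h1 : τ (1 - x) = σ (1 - x)) : τ = flipConf σ x := by
  funext i
  fin_cases x <;> fin_cases i <;> simp_all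

lemma Pda_flip {Jm : Fin 2 → Fin 2 → ℝ} {h : Fin 2 → ℝ} {β : ℝ} (σ τ : Fin 2 → Bool)
    (x : Fin 2) (h0 : τ x = !σ x) (h1 : τ (1 - x) = σ (1 - x)) :
    Pda Jm h β σ τ = acc Jm h β σ x * (1 - acc Jm h β σ (1 - x))
      + 2⁻¹ * (acc Jm h β σ x * acc Jm h β σ (1 - x)) := by
  have hτ : τ = flipConf σ x := flip_eq_of σ τ x h0 h1
  have hne : τ ≠ σ := by
    intro hc; rw [hc] at h0; simp at h0
  rw [Pda, if_neg hne]
  have hfil : (Finset.univ.filter (fun z : Fin 2 => τ = flipConf σ z)) = {x} := by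
    ext z
    simp only [Finset.mem_filter, Finset.mem_univ, true_and, Finset.mem_singleton]
    constructor
    · intro hz
      by_contra hzx
      have hzx' : z = 1 - x := by fin_cases z <;> fin_cases x <;> simp_all
      have := congrFun hz (1 - x)
      rw [hzx'] at this
      rw [h1] at this
      fin_cases x <;> simp_all
    · intro hz; rw [hz, hτ]
  rw [hfil, Finset.sum_singleton]
  have hpow : ((Finset.univ : Finset (Fin 2)).powerset.filter (fun S => x ∈ S))
      = {{x}, Finset.univ} := by
    fin_cases x <;> decide
  rw [hpow]
  rw [Finset.sum_insert (by fin_cases x <;> decide), Finset.sum_singleton]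
  have hc : ({x} : Finset (Fin 2))ᶜ = {1 - x} := by fin_cases x <;> decide
  have hcu : (Finset.univ : Finset (Fin 2))ᶜ = ∅ := by decide
  have hun : (Finset.univ : Finset (Fin 2)) = {x, 1 - x} := by fin_cases x <;> decide
  rw [hc, hcu]
  rw [hun, Finset.prod_insert (by fin_cases x <;> decide)]
  simp [Finset.card_insert_of_notMem (by fin_cases x <;> decide : x ∉ ({1-x} : Finset (Fin 2)))]

lemma Pda_opp {Jm : Fin 2 → Fin 2 → ℝ} {h : Fin 2 → ℝ} {β : ℝ} (σ τ : Fin 2 → Bool)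
    (h0 : τ 0 = !σ 0) (h1 : τ 1 = !σ 1) : Pda Jm h β σ τ = 0 := by
  have hne : τ ≠ σ := by intro hc; rw [hc] at h0; simp at h0
  rw [Pda, if_neg hne]
  have hfil : (Finset.univ.filter (fun z : Fin 2 => τ = flipConf σ z)) = ∅ := by
    ext z
    simp only [Finset.mem_filter, Finset.mem_univ, true_and, Finset.notMem_empty, iff_false]
    intro hz
    fin_cases z
    · have := congrFun hz 1; simp_all
    · have := congrFun hz 0; simp_all
  rw [hfil, Finset.sum_empty]
theorem two_spin_stationary_distribution
    (J : ℝ) (hJ : 0 ≤ J) (β : ℝ) (hβ : 0 < β) (σ : Fin 2 → Bool) :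
    ∑ τ : Fin 2 → Bool,
        piDA2 J β τ *
          Pda (fun i j => if i = j then 0 else J) (fun _ => 0) β τ σ
      = piDA2 J β σ := by
  classical
  have huniv : (Finset.univ : Finset (Fin 2 → Bool))
      = {σ, flipConf σ 0, flipConf σ 1, flipConf (flipConf σ 0) 1} := by
    ext τ
    simp only [Finset.mem_univ, true_iff, Finset.mem_insert, Finset.mem_singleton]
    by_cases e0 : τ 0 = σ 0 <;> by_cases e1 : τ 1 = σ 1
    · left; funext i; fin_cases i <;> assumption
    · right; right; left
      have h1 : τ 1 = !σ 1 := by cases h : τ 1 <;> cases h' : σ 1 <;> simp_all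
      funext i; fin_cases i <;> simp_all
    · right; left
      have h0 : τ 0 = !σ 0 := by cases h : τ 0 <;> cases h' : σ 0 <;> simp_all
      funext i; fin_cases i <;> simp_all
    · right; right; right
      have h0 : τ 0 = !σ 0 := by cases h : τ 0 <;> cases h' : σ 0 <;> simp_all
      have h1 : τ 1 = !σ 1 := by cases h : τ 1 <;> cases h' : σ 1 <;> simp_all
      funext i; fin_cases i <;> simp_all
  have n1 : σ ∉ ({flipConf σ 0, flipConf σ 1, flipConf (flipConf σ 0) 1}
      : Finset (Fin 2 → Bool)) := by
    simp only [Finset.mem_insert, Finset.mem_singleton]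
    push_neg
    refine ⟨fun hc => ?_, fun hc => ?_, fun hc => ?_⟩
    · have := congrFun hc 0; simp at this
    · have := congrFun hc 1; simp at this
    · have := congrFun hc 0; simp at this
  have n2 : flipConf σ 0 ∉ ({flipConf σ 1, flipConf (flipConf σ 0) 1}
      : Finset (Fin 2 → Bool)) := by
    simp only [Finset.mem_insert, Finset.mem_singleton]
    push_neg
    constructor
    · intro hc; have := congrFun hc 0; simp at this
    · intro hc; have := congrFun hc 1; simp at this
  have n3 : flipConf σ 1 ∉ ({flipConf (flipConf σ 0) 1} : Finset (Fin 2 → Bool)) := by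
    simp only [Finset.mem_singleton]
    intro hc; have := congrFun hc 0; simp at this
  rw [huniv, Finset.sum_insert n1, Finset.sum_insert n2, Finset.sum_insert n3,
    Finset.sum_singleton]
  rw [Pda_self σ,
    Pda_flip (flipConf σ 0) σ 0 (by simp) (by show σ 1 = flipConf σ 0 1; simp),
    Pda_flip (flipConf σ 1) σ 1 (by simp) (by show σ 0 = flipConf σ 1 0; simp),
    Pda_opp (flipConf (flipConf σ 0) 1) σ (by simp) (by simp)]
  simp only [acc2 J hJ β]
  have r1 : Real.exp (-β * J) = (Real.exp (β * J))⁻¹ := by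
    rw [← Real.exp_neg, neg_mul]
  have r2 : Real.exp (-2 * β * J) = (Real.exp (β * J))⁻¹ ^ 2 := by
    rw [show (-2 * β * J) = -(β * J) + -(β * J) by ring, Real.exp_add, Real.exp_neg]; ring
  have r3 : Real.exp (-(2 * β * J)) = (Real.exp (β * J))⁻¹ ^ 2 := by
    rw [show (-(2 * β * J)) = -(β * J) + -(β * J) by ring, Real.exp_add, Real.exp_neg]; ring
  have hu1 : 1 ≤ Real.exp (β * J) := Real.one_le_exp (by positivity)
  have hu0 : 0 < Real.exp (β * J) := Real.exp_pos _
  set u := Real.exp (β * J) with hu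
  have hv0 : 0 < u⁻¹ := by positivity
  have hv1 : u⁻¹ ≤ 1 := inv_le_one_of_one_le₀ hu1
  have hD : 0 < 2 * u + 2 * u⁻¹ + 2 * u⁻¹ * (1 - u⁻¹ ^ 2) := by
    nlinarith [mul_nonneg hv0.le (sub_nonneg.mpr (by nlinarith : u⁻¹ ^ 2 ≤ 1))]
  have hu' : u ≠ 0 := hu0.ne'
  by_cases hcc : σ 0 = σ 1
  · have c2 : ¬ ((!σ 0) = σ 1) := by rw [hcc]; simp
    have c3 : ¬ (σ 0 = !σ 1) := by rw [hcc]; simp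
    have c4 : (!σ 0) = !σ 1 := by rw [hcc]
    simp only [piDA2, flip_same, flip01, flip10, if_pos hcc, if_neg c2, if_neg c3, if_pos c4]
    rw [r1, r2, r3]
    simp only [div_mul_eq_mul_div, ← add_div, mul_zero, add_zero, zero_div]
    rw [div_eq_div_iff (ne_of_gt hD) (ne_of_gt hD)]
    field_simp
    ring
  · have c2 : (!σ 0) = σ 1 := by cases h : σ 0 <;> cases h' : σ 1 <;> simp_all
    have c3 : σ 0 = !σ 1 := by rw [← c2, Bool.not_not]
    have c4 : ¬ ((!σ 0) = !σ 1) := fun hcon => hcc (by simpa using hcon)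
    simp only [piDA2, flip_same, flip01, flip10, if_neg hcc, if_pos c2, if_pos c3, if_neg c4]
    rw [r1, r2, r3]
    simp only [div_mul_eq_mul_div, ← add_div, mul_zero, add_zero, zero_div]
    rw [div_eq_div_iff (ne_of_gt hD) (ne_of_gt hD)]
    field_simp
    ring
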